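/- (Guy–Smith Periodicity Theorem) Let Γ be an octal game with octal code 0.d₁d₂...d_k, where d_k ≠ 0 and d_i = 0 for all i > k, and let H_n denote the Γ-heap of size n. Suppose that for some n₀ > 0 and p > 0, the Grundy values satisfy 𝒢(H_{n+p}) = 𝒢(H_n) for every n with n₀ ≤ n < 2n₀ + p + k. Then 𝒢(H_{n+p}) = 𝒢(H_n) for all n ≥ n₀. -/

import Mathlib

universe u

namespace SetTheory

/-- Mathlib's former `SetTheory.PGame` (removed from Mathlib), restored with its old definition. -/
inductive PGame : Type (u + 1)
  | mk : ∀ α β : Type u, (α → PGame) → (β → PGame) → PGame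

namespace PGame

instance : Zero PGame :=
  ⟨⟨PEmpty, PEmpty, PEmpty.elim, PEmpty.elim⟩⟩

noncomputable instance : Add PGame.{u} :=
  ⟨fun x y => by
    induction x generalizing y with | mk xl xr _ _ IHxl IHxr => _
    induction y with | mk yl yr yL yR IHyl IHyr => _
    have y := mk yl yr yL yR
    refine ⟨xl ⊕ yl, xr ⊕ yr, Sum.rec ?_ ?_, Sum.rec ?_ ?_⟩
    · exact fun i => IHxl i y
    · exact IHyl
    · exact fun i => IHxr i y
    · exact IHyr⟩

/-- The former `SetTheory.PGame.grundyValue`: the mex (`Ordinal.mex`, i.e.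
`sInf (Set.range f)ᶜ`) of the Grundy values of the left options. -/
noncomputable def grundyValue : PGame.{u} → Ordinal.{u}
  | mk _ _ L _ => sInf (Set.range fun i => grundyValue (L i))ᶜ

end PGame

end SetTheory

open SetTheory PGame

/-- The heap `H n` of the octal game with code digits `d 1, d 2, d 3, …`
(the value `d 0` is irrelevant: removals of `j` boxes are only allowed for `j ≥ 1`).
Writing `d j = ε₀ + 2·ε₁ + 4·ε₂`, a move removing `j` boxes from a heap of size `n` may go:
* to the empty position `0`, if `j = n` and `ε₀ = 1`;
* to the single heap `H (n - j)`, if `n - j ≥ 1` and `ε₁ = 1`;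
* to the sum `H a + H b` with `a, b ≥ 1` and `a + b = n - j`, if `ε₂ = 1`. -/
noncomputable def octalHeap (d : ℕ → ℕ) : ℕ → PGame.{0}
  | n =>
    PGame.mk
      ({ j : ℕ // j = n ∧ 1 ≤ j ∧ (d j).testBit 0 } ⊕
        ({ j : ℕ // 1 ≤ j ∧ j + 1 ≤ n ∧ (d j).testBit 1 } ⊕
          { q : ℕ × ℕ × ℕ //
              1 ≤ q.1 ∧ 1 ≤ q.2.1 ∧ 1 ≤ q.2.2 ∧ q.1 + q.2.1 + q.2.2 = n ∧
                (d q.1).testBit 2 }))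
      ({ j : ℕ // j = n ∧ 1 ≤ j ∧ (d j).testBit 0 } ⊕
        ({ j : ℕ // 1 ≤ j ∧ j + 1 ≤ n ∧ (d j).testBit 1 } ⊕
          { q : ℕ × ℕ × ℕ //
              1 ≤ q.1 ∧ 1 ≤ q.2.1 ∧ 1 ≤ q.2.2 ∧ q.1 + q.2.1 + q.2.2 = n ∧
                (d q.1).testBit 2 }))
      (fun i =>
        match i with
        | Sum.inl _ => 0
        | Sum.inr (Sum.inl ⟨j, _hj⟩) => octalHeap d (n - j)
        | Sum.inr (Sum.inr ⟨⟨_, a, b⟩, _hq⟩) => octalHeap d a + octalHeap d b)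
      (fun i =>
        match i with
        | Sum.inl _ => 0
        | Sum.inr (Sum.inl ⟨j, _hj⟩) => octalHeap d (n - j)
        | Sum.inr (Sum.inr ⟨⟨_, a, b⟩, _hq⟩) => octalHeap d a + octalHeap d b)
termination_by n => n
decreasing_by all_goals (simp_all; omega)

theorem mex_notMem {S : Set Ordinal.{u}} (hS : BddAbove S) : sInf Sᶜ ∉ S := by
  obtain ⟨B, hB⟩ := hS
  have hne : (Sᶜ).Nonempty := ⟨Order.succ B, fun h => not_le.2 (Order.lt_succ B) (hB h)⟩
  exact csInf_mem hne

theorem mex_lt {S : Set Ordinal.{u}} {c : Ordinal.{u}} (h : c < sInf Sᶜ) : c ∈ S := by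
  by_contra hc
  exact notMem_of_lt_csInf' h hc

theorem mex_eq {S : Set Ordinal.{u}} (c : Ordinal.{u}) (h1 : c ∉ S) (h2 : ∀ c' < c, c' ∈ S) :
    sInf Sᶜ = c :=
  le_antisymm (csInf_le' h1) (le_csInf ⟨c, h1⟩ fun x hx => not_lt.1 fun hlt => hx (h2 x hlt))

theorem bdd_range {ι : Type u} (f : ι → Ordinal.{u}) : BddAbove (Set.range f) :=
  Ordinal.bddAbove_of_small

/-- Nim-addition of ordinals, defined by the mex recursion. -/
noncomputable def gadd (a b : Ordinal.{u}) : Ordinal.{u} :=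
  sInf (Set.range (fun x : Set.Iio a => gadd x.1 b) ∪ Set.range (fun y : Set.Iio b => gadd a y.1))ᶜ
termination_by (a, b)
decreasing_by
  · exact Prod.Lex.left _ _ (Subtype.property _)
  · exact Prod.Lex.right _ (Subtype.property _)

theorem gadd_eq (a b : Ordinal.{u}) : gadd a b =
    sInf (Set.range (fun x : Set.Iio a => gadd x.1 b) ∪
      Set.range (fun y : Set.Iio b => gadd a y.1))ᶜ := by
  rw [gadd]

theorem gadd_bdd (a b : Ordinal.{u}) :
    BddAbove (Set.range (fun x : Set.Iio a => gadd x.1 b) ∪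
      Set.range (fun y : Set.Iio b => gadd a y.1)) :=
  Ordinal.bddAbove_of_small

theorem gadd_lt_left {a a' b : Ordinal.{u}} (h : a' < a) : gadd a' b ≠ gadd a b := by
  intro he
  apply mex_notMem (gadd_bdd a b)
  rw [← gadd_eq, ← he]
  exact Set.mem_union_left _ (Set.mem_range.2 ⟨⟨a', h⟩, rfl⟩)

theorem gadd_lt_right {a b b' : Ordinal.{u}} (h : b' < b) : gadd a b' ≠ gadd a b := by
  intro he
  apply mex_notMem (gadd_bdd a b)
  rw [← gadd_eq, ← he]
  exact Set.mem_union_right _ (Set.mem_range.2 ⟨⟨b', h⟩, rfl⟩)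

theorem gadd_right_cancel {a a' b : Ordinal.{u}} (h : gadd a' b = gadd a b) : a' = a := by
  rcases lt_trichotomy a' a with hl | he | hl
  · exact absurd h (gadd_lt_left hl)
  · exact he
  · exact absurd h.symm (gadd_lt_left hl)

theorem gadd_left_cancel {a b b' : Ordinal.{u}} (h : gadd a b' = gadd a b) : b' = b := by
  rcases lt_trichotomy b' b with hl | he | hl
  · exact absurd h (gadd_lt_right hl)
  · exact he
  · exact absurd h.symm (gadd_lt_right hl)

theorem gadd_lt {a b c : Ordinal.{u}} (h : c < gadd a b) :
    (∃ a' < a, gadd a' b = c) ∨ (∃ b' < b, gadd a b' = c) := by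
  rw [gadd_eq] at h
  rcases mex_lt h with ⟨⟨x, hx⟩, rfl⟩ | ⟨⟨y, hy⟩, rfl⟩
  · exact Or.inl ⟨x, hx, rfl⟩
  · exact Or.inr ⟨y, hy, rfl⟩

theorem grundyValue_mk' {α β : Type u} (L : α → PGame.{u}) (R : β → PGame.{u}) :
    grundyValue (PGame.mk α β L R) = sInf (Set.range fun i => grundyValue (L i))ᶜ := by
  rw [grundyValue]

theorem grundyValue_zero : grundyValue (0 : PGame.{u}) = 0 := by
  show grundyValue (PGame.mk PEmpty PEmpty PEmpty.elim PEmpty.elim) = 0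
  rw [grundyValue_mk']
  exact mex_eq 0 (by rintro ⟨⟨⟩, _⟩) (fun c hc => absurd hc (not_lt_of_ge (zero_le (a := c))))

theorem mk_add_mk {xl xr yl yr : Type u} (xL : xl → PGame.{u}) (xR : xr → PGame.{u})
    (yL : yl → PGame.{u}) (yR : yr → PGame.{u}) :
    PGame.mk xl xr xL xR + PGame.mk yl yr yL yR =
      PGame.mk (xl ⊕ yl) (xr ⊕ yr)
        (Sum.rec (fun i => xL i + PGame.mk yl yr yL yR) (fun j => PGame.mk xl xr xL xR + yL j))
        (Sum.rec (fun i => xR i + PGame.mk yl yr yL yR) (fun j => PGame.mk xl xr xL xR + yR j)) :=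
  rfl

theorem grundyValue_add (G H : PGame.{u}) :
    grundyValue (G + H) = gadd (grundyValue G) (grundyValue H) := by
  induction G generalizing H with
  | mk xl xr xL xR IHxl _ =>
  induction H with
  | mk yl yr yL yR IHyl _ =>
  have ha := grundyValue_mk' xL xR
  have hb := grundyValue_mk' yL yR
  rw [mk_add_mk, grundyValue_mk' (α := xl ⊕ yl)]
  apply mex_eq
  · rintro ⟨i | j, h⟩
    · change grundyValue (xL i + PGame.mk yl yr yL yR) = _ at h
      rw [IHxl i] at h
      exact mex_notMem (bdd_range fun i => grundyValue (xL i))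
        (Set.mem_range.2 ⟨i, (gadd_right_cancel h).trans ha⟩)
    · change grundyValue (PGame.mk xl xr xL xR + yL j) = _ at h
      rw [IHyl j] at h
      exact mex_notMem (bdd_range fun j => grundyValue (yL j))
        (Set.mem_range.2 ⟨j, (gadd_left_cancel h).trans hb⟩)
  · intro c hc
    rcases gadd_lt hc with ⟨a', ha', rfl⟩ | ⟨b', hb', rfl⟩
    · rw [ha] at ha'
      obtain ⟨i, hi⟩ := Set.mem_range.1 (mex_lt ha')
      refine Set.mem_range.2 ⟨Sum.inl i, ?_⟩
      change grundyValue (xL i + PGame.mk yl yr yL yR) = _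
      rw [IHxl i]
      exact congrArg (fun t => gadd t (grundyValue (PGame.mk yl yr yL yR))) hi
    · rw [hb] at hb'
      obtain ⟨j, hj⟩ := Set.mem_range.1 (mex_lt hb')
      refine Set.mem_range.2 ⟨Sum.inr j, ?_⟩
      change grundyValue (PGame.mk xl xr xL xR + yL j) = _
      rw [IHyl j]
      exact congrArg (fun t => gadd (grundyValue (PGame.mk xl xr xL xR)) t) hj

theorem octalHeap_range (d : ℕ → ℕ) (m : ℕ) :
    grundyValue (octalHeap d m) = sInf
      {x | (1 ≤ m ∧ (d m).testBit 0 ∧ x = 0) ∨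
        (∃ j, 1 ≤ j ∧ j + 1 ≤ m ∧ (d j).testBit 1 ∧
          x = grundyValue (octalHeap d (m - j))) ∨
        (∃ j a b, 1 ≤ j ∧ 1 ≤ a ∧ 1 ≤ b ∧ j + a + b = m ∧ (d j).testBit 2 ∧
          x = gadd (grundyValue (octalHeap d a)) (grundyValue (octalHeap d b)))}ᶜ := by
  conv_lhs => rw [octalHeap, grundyValue_mk']
  congr 2
  ext x
  simp only [Set.mem_range, Function.comp_apply, Set.mem_setOf_eq]
  constructor
  · rintro ⟨(⟨j, rfl, h2, h3⟩ | ⟨j, h1, h2, h3⟩ | ⟨⟨j, a, b⟩, h1, h2, h3, h4, h5⟩), rfl⟩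
    · exact Or.inl ⟨h2, h3, grundyValue_zero⟩
    · exact Or.inr (Or.inl ⟨j, h1, h2, h3, rfl⟩)
    · exact Or.inr (Or.inr ⟨j, a, b, h1, h2, h3, h4, h5, grundyValue_add _ _⟩)
  · rintro (⟨h1, h2, rfl⟩ | ⟨j, h1, h2, h3, rfl⟩ | ⟨j, a, b, h1, h2, h3, h4, h5, rfl⟩)
    · exact ⟨Sum.inl ⟨m, rfl, h1, h2⟩, grundyValue_zero⟩
    · exact ⟨Sum.inr (Sum.inl ⟨j, h1, h2, h3⟩), rfl⟩
    · refine ⟨Sum.inr (Sum.inr ⟨⟨j, a, b⟩, h1, h2, h3, h4, h5⟩), ?_⟩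
      exact grundyValue_add (octalHeap d a) (octalHeap d b)

/-- **Guy–Smith Periodicity Theorem.** Let `Γ` be an octal game with code
`0.d₁d₂…d_k` where `d_k ≠ 0` and `d_i = 0` for `i > k`, and let `H n` be the heap of
size `n`.  If for some `n₀ > 0` and `p > 0` the Grundy values satisfy
`𝒢(H (n+p)) = 𝒢(H n)` for every `n` with `n₀ ≤ n < 2n₀ + p + k`, then
`𝒢(H (n+p)) = 𝒢(H n)` for all `n ≥ n₀`. -/
theorem guy_smith_periodicity (d : ℕ → ℕ) (hd : ∀ j, d j < 8)
    (k : ℕ) (hk1 : 1 ≤ k) (hk : d k ≠ 0) (hk' : ∀ i, k < i → d i = 0)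
    (n₀ p : ℕ) (hn₀ : 0 < n₀) (hp : 0 < p)
    (hper : ∀ n, n₀ ≤ n → n < 2 * n₀ + p + k →
      grundyValue (octalHeap d (n + p)) = grundyValue (octalHeap d n)) :
    ∀ n, n₀ ≤ n → grundyValue (octalHeap d (n + p)) = grundyValue (octalHeap d n) := by
  have hbit : ∀ j b, k < j → (d j).testBit b = false := by
    intro j b hj; rw [hk' j hj]; exact Nat.zero_testBit b
  have hle : ∀ j : ℕ, (d j).testBit 1 = true ∨ (d j).testBit 2 = true → j ≤ k := by
    intro j hj
    by_contra h
    push_neg at h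
    rcases hj with hj | hj <;> rw [hbit j _ h] at hj <;> exact Bool.noConfusion hj
  intro n
  induction n using Nat.strong_induction_on with
  | _ n IH =>
    intro hn
    by_cases hsmall : n < 2 * n₀ + p + k
    · exact hper n hn hsmall
    push_neg at hsmall
    have hIH : ∀ m, n₀ ≤ m → m < n →
        grundyValue (octalHeap d (m + p)) = grundyValue (octalHeap d m) :=
      fun m h1 h2 => IH m h2 h1
    rw [octalHeap_range d (n + p), octalHeap_range d n]
    congr 1
    congr 1
    ext x
    simp only [Set.mem_setOf_eq]
    constructor
    · rintro (⟨h1, h2, _⟩ | ⟨j, h1, h2, h3, hx⟩ | ⟨j, a, b, h1, h2, h3, h4, h5, hx⟩)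
      · rw [hbit (n + p) 0 (by omega)] at h2; exact absurd h2 (by simp)
      · have hjk : j ≤ k := hle j (Or.inl h3)
        refine Or.inr (Or.inl ⟨j, h1, by omega, h3, ?_⟩)
        rw [hx, show n + p - j = (n - j) + p from by omega,
          hIH (n - j) (by omega) (by omega)]
      · have hjk : j ≤ k := hle j (Or.inr h5)
        rcases le_total a b with hab | hab
        · refine Or.inr (Or.inr ⟨j, a, b - p, h1, h2, by omega, by omega, h5, ?_⟩)
          have hb := hIH (b - p) (by omega) (by omega)
          rw [show b - p + p = b from by omega] at hb
          rw [hx, hb]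
        · refine Or.inr (Or.inr ⟨j, a - p, b, h1, by omega, h3, by omega, h5, ?_⟩)
          have ha := hIH (a - p) (by omega) (by omega)
          rw [show a - p + p = a from by omega] at ha
          rw [hx, ha]
    · rintro (⟨h1, h2, _⟩ | ⟨j, h1, h2, h3, hx⟩ | ⟨j, a, b, h1, h2, h3, h4, h5, hx⟩)
      · rw [hbit n 0 (by omega)] at h2; exact absurd h2 (by simp)
      · have hjk : j ≤ k := hle j (Or.inl h3)
        refine Or.inr (Or.inl ⟨j, h1, by omega, h3, ?_⟩)
        rw [hx, show n + p - j = (n - j) + p from by omega,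
          hIH (n - j) (by omega) (by omega)]
      · have hjk : j ≤ k := hle j (Or.inr h5)
        rcases le_total a b with hab | hab
        · refine Or.inr (Or.inr ⟨j, a, b + p, h1, h2, by omega, by omega, h5, ?_⟩)
          have hb := hIH b (by omega) (by omega)
          rw [hx, hb]
        · refine Or.inr (Or.inr ⟨j, a + p, b, h1, by omega, h3, by omega, h5, ?_⟩)
          have ha := hIH a (by omega) (by omega)
          rw [hx, ha]
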